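/- In the random intersection graph G(n,m,F) with m = ⌊βn^α⌋ and p_i = min(γ W_i n^{-(1+α)/2}, 1), if F has finite mean, then the expected number D'' of neighbors of vertex 1 whose weight exceeds n^{1/4} satisfies E[D''] ≤ βγ(γE[W·1{W > n^{1/4}}] + n^{(1+α)/2}·P(γW ≥ n^{(1+α)/2})), and in particular E[D''] → 0 as n → ∞. -/

import Mathlib

open MeasureTheory ProbabilityTheory Filter Real

noncomputable section

/-- Bernoulli measure on `Bool` with success probability `p` (clamped into `[0,1]`). -/
def bern (p : ℝ) : Measure Bool :=
  (PMF.bernoulli (Real.toNNReal (min p 1))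
    (Real.toNNReal_le_one.mpr (min_le_right _ _))).toMeasure

instance bern.isProbabilityMeasure (p : ℝ) : IsProbabilityMeasure (bern p) := by
  unfold bern; infer_instance

/-- The (conditional) law of the bipartite graph `B(n,m,·)` given the group-membership
probabilities `p i` of the `n` vertices: vertex `i` is joined to each of the `m` groups
independently with probability `p i`. -/
def bipLaw (n m : ℕ) (p : Fin n → ℝ) : Measure (Fin n → Fin m → Bool) :=
  Measure.pi fun i => Measure.pi fun _ : Fin m => bern (p i)

instance bipLaw.isProbabilityMeasure (n m : ℕ) (p : Fin n → ℝ) :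
    IsProbabilityMeasure (bipLaw n m p) := by
  unfold bipLaw; infer_instance

/-- The number of groups, `m = ⌊β n^α⌋`. -/
def numGroups (β α : ℝ) (n : ℕ) : ℕ := ⌊β * (n : ℝ) ^ α⌋₊

/-- The group-membership probability `p_i = min(γ w n^{-(1+α)/2}, 1)` of a vertex
with weight `w`. -/
def pw (γ α : ℝ) (n : ℕ) (w : ℝ) : ℝ := min (γ * w * (n : ℝ) ^ (-(1 + α) / 2)) 1

/-- Two distinct vertices are adjacent in the random intersection graph iff they share
at least one group in the bipartite graph. -/
def Adj {n m : ℕ} (B : Fin n → Fin m → Bool) (i j : Fin n) : Prop :=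
  ∃ a : Fin m, B i a ∧ B j a

/-- The degree of vertex `i` in the random intersection graph determined by the
bipartite graph `B`. -/
def deg {n m : ℕ} (B : Fin n → Fin m → Bool) (i : Fin n) : ℕ :=
  Set.ncard {j | j ≠ i ∧ Adj B i j}

/-- The expected number `E[D'']` of neighbors of vertex `0` in `G(n,m,F)` whose weight
exceeds `n^{1/4}`, all the weights being i.i.d. with law `F`. -/
def expDegBig (α β γ : ℝ) (F : Measure ℝ) (n : ℕ) : ℝ :=
  if h : n ≠ 0 then
    haveI : NeZero n := ⟨h⟩
    ∫ v : Fin n → ℝ,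
      (∫ B, ((Set.ncard {j : Fin n | j ≠ 0 ∧ (n : ℝ) ^ ((1 : ℝ) / 4) < v j ∧ Adj B 0 j} : ℕ) : ℝ)
        ∂ bipLaw n (numGroups β α n) fun i => pw γ α n (v i))
      ∂ Measure.pi fun _ : Fin n => F
  else 0

lemma bern_true (p : ℝ) : bern p {true} = ENNReal.ofReal (min p 1) := by
  unfold bern
  rw [PMF.toMeasure_apply_singleton _ _ (by trivial)]
  simp [PMF.bernoulli_apply, ENNReal.ofReal]

lemma pi_bern_eval (m : ℕ) (p : ℝ) (a : Fin m) :
    (Measure.pi fun _ : Fin m => bern p) {f | f a = true} = ENNReal.ofReal (min p 1) := by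
  have h : {f : Fin m → Bool | f a = true} =
      Set.pi Set.univ (fun b => if b = a then {true} else Set.univ) := by
    ext f
    simp only [Set.mem_setOf_eq, Set.mem_pi, Set.mem_univ, true_implies]
    constructor
    · intro hf b
      by_cases hb : b = a <;> simp [hb, hf]
    · intro hf
      have := hf a; simpa using this
  rw [h, Measure.pi_pi]
  rw [Finset.prod_eq_single a (fun b _ hb => by
    simp only [if_neg hb]; exact measure_univ) (by simp)]
  simp [bern_true]

lemma bipLaw_two (n m : ℕ) (p : Fin n → ℝ) (i j : Fin n) (hij : i ≠ j) (a : Fin m) :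
    bipLaw n m p {B | B i a = true ∧ B j a = true} =
      ENNReal.ofReal (min (p i) 1) * ENNReal.ofReal (min (p j) 1) := by
  have h : {B : Fin n → Fin m → Bool | B i a = true ∧ B j a = true} =
      Set.pi Set.univ (fun k => if k = i then {f : Fin m → Bool | f a = true}
        else if k = j then {f : Fin m → Bool | f a = true} else Set.univ) := by
    ext B
    simp only [Set.mem_setOf_eq, Set.mem_pi, Set.mem_univ, true_implies]
    constructor
    · intro hB k
      by_cases hk : k = i
      · simp [hk, hB.1]
      · by_cases hk' : k = j <;> simp [hk, hk', hB.2]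
    · exact fun hB => ⟨by have := hB i; simpa using this, by have := hB j; simpa [hij.symm] using this⟩
  rw [bipLaw, h, Measure.pi_pi]
  rw [Finset.prod_eq_mul_of_mem i j (Finset.mem_univ _) (Finset.mem_univ _) hij
    (fun k _ hk => by simp only [if_neg hk.1, if_neg hk.2]; exact measure_univ)]
  simp [pi_bern_eval, hij, hij.symm]

lemma bipLaw_adj_le (n m : ℕ) (p : Fin n → ℝ) (i j : Fin n) (hij : i ≠ j) :
    bipLaw n m p {B | Adj B i j} ≤
      (m : ENNReal) * (ENNReal.ofReal (min (p i) 1) * ENNReal.ofReal (min (p j) 1)) := by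
  have h : {B : Fin n → Fin m → Bool | Adj B i j} =
      ⋃ a : Fin m, {B | B i a = true ∧ B j a = true} := by
    ext B; simp [Adj]
  rw [h]
  refine (measure_iUnion_le _).trans ?_
  rw [tsum_fintype]
  refine le_of_eq ?_
  calc ∑ a : Fin m, bipLaw n m p {B | B i a = true ∧ B j a = true}
      = ∑ _a : Fin m, ENNReal.ofReal (min (p i) 1) * ENNReal.ofReal (min (p j) 1) := by
        exact Finset.sum_congr rfl fun a _ => bipLaw_two n m p i j hij a
    _ = (m : ENNReal) * (ENNReal.ofReal (min (p i) 1) * ENNReal.ofReal (min (p j) 1)) := by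
        simp [Finset.sum_const, mul_comm]

lemma toReal_min_le (γ α : ℝ) (hγ : 0 < γ) (n : ℕ) (w : ℝ) :
    (ENNReal.ofReal (min (pw γ α n w) 1)).toReal ≤ γ * (n : ℝ) ^ (-(1 + α) / 2) * max w 0 := by
  rw [ENNReal.toReal_ofReal']
  have hpow : (0:ℝ) ≤ (n : ℝ) ^ (-(1 + α) / 2) := Real.rpow_nonneg (Nat.cast_nonneg n) _
  unfold pw
  rw [min_assoc, min_self]
  rcases le_or_gt w 0 with hw | hw
  · have : γ * w * (n : ℝ) ^ (-(1 + α) / 2) ≤ 0 :=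
      mul_nonpos_of_nonpos_of_nonneg (mul_nonpos_of_nonneg_of_nonpos hγ.le hw) hpow
    have h1 : max (min (γ * w * (n : ℝ) ^ (-(1 + α) / 2)) 1) 0 = 0 := by
      rw [max_eq_right]; exact (min_le_of_left_le this).trans (by norm_num)
    rw [h1, max_eq_right hw]; simp
  · rw [max_eq_left hw.le]
    have : min (γ * w * (n : ℝ) ^ (-(1 + α) / 2)) 1 ≤ γ * w * (n : ℝ) ^ (-(1 + α) / 2) :=
      min_le_left _ _
    have h2 : (0:ℝ) ≤ γ * w * (n : ℝ) ^ (-(1 + α) / 2) :=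
      mul_nonneg (mul_nonneg hγ.le hw.le) hpow
    refine (max_le ?_ ?_) <;> [skip; nlinarith]
    calc min (γ * w * (n : ℝ) ^ (-(1 + α) / 2)) 1 ≤ γ * w * (n : ℝ) ^ (-(1 + α) / 2) := this
      _ = γ * (n : ℝ) ^ (-(1 + α) / 2) * w := by ring

lemma inner_bound (γ α : ℝ) (hγ : 0 < γ) (n m : ℕ) [NeZero n] (v : Fin n → ℝ) (c : ℝ) :
    (∫ B, ((Set.ncard {j : Fin n | j ≠ 0 ∧ c < v j ∧ Adj B 0 j} : ℕ) : ℝ)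
        ∂ bipLaw n m fun i => pw γ α n (v i)) ≤
      ∑ j : Fin n, (if j = 0 then 0 else
        (m : ℝ) * (γ * (n : ℝ) ^ (-(1 + α) / 2) * max (v 0) 0) *
          (if c < v j then γ * (n : ℝ) ^ (-(1 + α) / 2) * max (v j) 0 else 0)) := by
  classical
  have hcount : ∀ B : Fin n → Fin m → Bool,
      ((Set.ncard {j : Fin n | j ≠ 0 ∧ c < v j ∧ Adj B 0 j} : ℕ) : ℝ) =
      ∑ j : Fin n, (if j ≠ 0 ∧ c < v j then ({B' | Adj B' 0 j}.indicator (1 : (Fin n → Fin m → Bool) → ℝ) B) else 0) := by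
    intro B
    rw [Set.ncard_eq_toFinset_card', Set.toFinset_setOf]
    rw [Finset.card_filter]
    push_cast
    refine Finset.sum_congr rfl fun j _ => ?_
    by_cases h1 : j ≠ 0 ∧ c < v j
    · by_cases h2 : Adj B 0 j <;> simp [h1.1, h1.2, h2, Set.indicator_apply]
    · push_neg at h1
      by_cases h0 : j = 0
      · simp [h0]
      · simp [h0, Set.indicator_apply, not_lt.mpr (h1 h0)]
  simp_rw [hcount]
  rw [MeasureTheory.integral_finset_sum _ (fun j _ => Integrable.of_finite)]
  refine Finset.sum_le_sum fun j _ => ?_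
  by_cases h1 : j ≠ 0 ∧ c < v j
  · simp only [if_pos h1, if_neg h1.1, if_pos h1.2]
    rw [MeasureTheory.integral_indicator_one (MeasurableSet.of_discrete)]
    have hfin : (m : ENNReal) * (ENNReal.ofReal (min (pw γ α n (v 0)) 1) *
        ENNReal.ofReal (min (pw γ α n (v j)) 1)) ≠ ⊤ :=
      ENNReal.mul_ne_top (ENNReal.natCast_ne_top m)
        (ENNReal.mul_ne_top ENNReal.ofReal_ne_top ENNReal.ofReal_ne_top)
    refine (ENNReal.toReal_mono hfin
      (bipLaw_adj_le n m (fun i => pw γ α n (v i)) 0 j (Ne.symm h1.1))).trans ?_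
    rw [ENNReal.toReal_mul, ENNReal.toReal_mul, ENNReal.toReal_natCast]
    have h0' := toReal_min_le γ α hγ n (v 0)
    have hj' := toReal_min_le γ α hγ n (v j)
    have hpow : (0:ℝ) ≤ (n : ℝ) ^ (-(1 + α) / 2) := Real.rpow_nonneg (Nat.cast_nonneg n) _
    have hA : (0:ℝ) ≤ (ENNReal.ofReal (min (pw γ α n (v 0)) 1)).toReal := ENNReal.toReal_nonneg
    have hB : (0:ℝ) ≤ (ENNReal.ofReal (min (pw γ α n (v j)) 1)).toReal := ENNReal.toReal_nonneg
    have hg0 : (0:ℝ) ≤ γ * (n : ℝ) ^ (-(1 + α) / 2) * max (v 0) 0 :=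
      mul_nonneg (mul_nonneg hγ.le hpow) (le_max_right _ _)
    refine le_trans (mul_le_mul_of_nonneg_left (mul_le_mul h0' hj' hB hg0)
      (Nat.cast_nonneg m)) ?_
    exact (mul_assoc ((m:ℝ)) _ _).ge
  · have hz : (fun B : Fin n → Fin m → Bool =>
        (if j ≠ 0 ∧ c < v j then ({B' | Adj B' 0 j}.indicator (1 : (Fin n → Fin m → Bool) → ℝ) B) else 0)) =
        fun _ => 0 := by funext B; rw [if_neg h1]
    rw [hz, MeasureTheory.integral_zero]
    by_cases h0 : j = 0
    · simp [h0]
    · have h2 : ¬ c < v j := fun hc => h1 ⟨h0, hc⟩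
      simp [h0, h2]

lemma integral_pi_prod {n : ℕ} (F : Measure ℝ) [SigmaFinite F] (φ : Fin n → ℝ → ℝ) :
    ∫ v : Fin n → ℝ, ∏ i, φ i (v i) ∂ Measure.pi (fun _ => F) = ∏ i, ∫ x, φ i x ∂F := by
  letI : MeasureSpace ℝ := ⟨F⟩
  haveI : SigmaFinite (volume : Measure ℝ) := ‹SigmaFinite F›
  exact MeasureTheory.integral_fintype_prod_eq_prod φ

lemma integrable_pi_prod {n : ℕ} (F : Measure ℝ) [SigmaFinite F] (φ : Fin n → ℝ → ℝ)
    (hφ : ∀ i, Integrable (φ i) F) :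
    Integrable (fun v : Fin n → ℝ => ∏ i, φ i (v i)) (Measure.pi fun _ => F) := by
  letI : MeasureSpace ℝ := ⟨F⟩
  haveI : SigmaFinite (volume : Measure ℝ) := ‹SigmaFinite F›
  exact Integrable.fintype_prod hφ

lemma part1 (α β γ : ℝ) (hα : 0 < α) (hβ : 0 < β) (hγ : 0 < γ)
    (F : Measure ℝ) [IsProbabilityMeasure F]
    (hFpos : F (Set.Iic 0) = 0)
    (hFint : Integrable (fun x => x) F) (hFmean : ∫ x, x ∂F = 1)
    (n : ℕ) (hn : 1 ≤ n) :
    expDegBig α β γ F n ≤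
      β * γ * (γ * ∫ x in {y : ℝ | (n : ℝ) ^ ((1 : ℝ) / 4) < y}, x ∂F) := by
  classical
  have hn0 : n ≠ 0 := Nat.one_le_iff_ne_zero.mp hn
  haveI : NeZero n := ⟨hn0⟩
  have hnpos : (0:ℝ) < (n:ℝ) := by exact_mod_cast Nat.pos_of_ne_zero hn0
  set m := numGroups β α n with hm
  set c : ℝ := (n : ℝ) ^ ((1 : ℝ)/4) with hc
  set s : ℝ := (n : ℝ) ^ (-(1 + α) / 2) with hs
  have hspos : 0 < s := Real.rpow_pos_of_pos hnpos _
  have hcnn : 0 ≤ c := Real.rpow_nonneg hnpos.le _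
  set h : ℝ → ℝ := fun w => γ * s * max w 0 with hhdef
  set hcf : ℝ → ℝ := fun w => if c < w then γ * s * max w 0 else 0 with hcfdef
  have hcf_ind : hcf = Set.indicator (Set.Ioi c) h := by
    funext w
    simp [hcfdef, hhdef, Set.indicator_apply, Set.mem_Ioi]
  have hinth : Integrable h F := hFint.pos_part.const_mul (γ * s)
  have hinthc : Integrable hcf F := by
    rw [hcf_ind]; exact hinth.indicator measurableSet_Ioi
  have hmax_ae : (fun x : ℝ => max x 0) =ᵐ[F] fun x => x := by
    rw [Filter.EventuallyEq, ae_iff]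
    refine measure_mono_null (fun x hx => ?_) hFpos
    simp only [Set.mem_setOf_eq] at hx
    simp only [Set.mem_Iic]
    by_contra hx0
    exact hx (max_eq_left (le_of_lt (lt_of_not_ge hx0)))
  have hIh : ∫ x, h x ∂F = γ * s := by
    rw [hhdef]
    simp only
    rw [MeasureTheory.integral_const_mul, integral_congr_ae hmax_ae, hFmean, mul_one]
  set I : ℝ := ∫ x in {y : ℝ | c < y}, x ∂F with hI
  have hIoi : {y : ℝ | c < y} = Set.Ioi c := rfl
  have hInn : 0 ≤ I := by
    rw [hI, hIoi]
    exact setIntegral_nonneg measurableSet_Ioi fun x hx => le_of_lt (lt_of_le_of_lt hcnn hx)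
  have hIhc : ∫ x, hcf x ∂F = γ * s * I := by
    rw [hcf_ind, MeasureTheory.integral_indicator measurableSet_Ioi, hhdef]
    simp only
    rw [MeasureTheory.integral_const_mul, hI, hIoi]
    congr 1
    refine setIntegral_congr_fun measurableSet_Ioi fun x hx => ?_
    exact max_eq_left (le_of_lt (lt_of_le_of_lt hcnn hx))
  set term : Fin n → (Fin n → ℝ) → ℝ := fun j v => if j = 0 then 0 else
      (m : ℝ) * (γ * s * max (v 0) 0) * (if c < v j then γ * s * max (v j) 0 else 0) with hterm
  set φ : Fin n → Fin n → ℝ → ℝ := fun j i =>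
      if i = 0 then h else if i = j then hcf else fun _ => (1:ℝ) with hφdef
  have hφint : ∀ j i, Integrable (φ j i) F := by
    intro j i
    by_cases h0 : i = 0
    · simpa [hφdef, h0] using hinth
    · by_cases hj : i = j
      · subst hj
        simpa [hφdef, h0] using hinthc
      · simpa [hφdef, h0, hj] using integrable_const (1:ℝ)
  have hprod : ∀ j : Fin n, j ≠ 0 → ∀ v : Fin n → ℝ,
      ∏ i, φ j i (v i) = h (v 0) * hcf (v j) := by
    intro j hj v
    rw [Finset.prod_eq_mul_of_mem 0 j (Finset.mem_univ _) (Finset.mem_univ _) (Ne.symm hj)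
      (fun k _ hk => by simp [hφdef, hk.1, hk.2])]
    simp [hφdef, hj]
  have htermeq : ∀ j : Fin n, j ≠ 0 → ∀ v,
      term j v = (m : ℝ) * ∏ i, φ j i (v i) := by
    intro j hj v
    rw [hprod j hj v]
    simp only [hterm, if_neg hj, hhdef, hcfdef]
    ring
  have hint : ∀ j : Fin n, Integrable (term j) (Measure.pi fun _ : Fin n => F) := by
    intro j
    by_cases hj : j = 0
    · simp only [hterm, if_pos hj]
      exact integrable_const 0
    · have : term j = fun v => (m : ℝ) * ∏ i, φ j i (v i) := funext (htermeq j hj)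
      rw [this]
      exact (integrable_pi_prod F _ (hφint j)).const_mul _
  set K : ℝ := (m : ℝ) * ((γ * s) * (γ * s * I)) with hK
  have hKnn : 0 ≤ K := by
    refine mul_nonneg (Nat.cast_nonneg m) (mul_nonneg ?_ (mul_nonneg ?_ hInn)) <;>
      exact mul_nonneg hγ.le hspos.le
  have hval : ∀ j : Fin n, j ≠ 0 →
      ∫ v, term j v ∂(Measure.pi fun _ : Fin n => F) = K := by
    intro j hj
    simp_rw [htermeq j hj]
    rw [MeasureTheory.integral_const_mul, integral_pi_prod F _]
    rw [Finset.prod_eq_mul_of_mem 0 j (Finset.mem_univ _) (Finset.mem_univ _) (Ne.symm hj)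
      (fun k _ hk => by simp [hφdef, hk.1, hk.2])]
    have e0 : φ j 0 = h := by simp [hφdef]
    have ej : φ j j = hcf := by simp [hφdef, hj]
    rw [e0, ej, hIh, hIhc, hK]
  unfold expDegBig
  rw [dif_pos hn0]
  have hmono : (∫ v : Fin n → ℝ,
      (∫ B, ((Set.ncard {j : Fin n | j ≠ 0 ∧ (n : ℝ) ^ ((1 : ℝ) / 4) < v j ∧ Adj B 0 j} : ℕ) : ℝ)
        ∂ bipLaw n (numGroups β α n) fun i => pw γ α n (v i))
      ∂ Measure.pi fun _ : Fin n => F) ≤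
      ∫ v, (∑ j, term j v) ∂(Measure.pi fun _ : Fin n => F) := by
    refine integral_mono_of_nonneg (ae_of_all _ fun v => ?_)
      (MeasureTheory.integrable_finset_sum _ fun j _ => hint j) (ae_of_all _ fun v => ?_)
    · exact integral_nonneg fun B => Nat.cast_nonneg _
    · exact inner_bound γ α hγ n m v c
  refine hmono.trans ?_
  rw [MeasureTheory.integral_finset_sum _ fun j _ => hint j]
  have hsum : ∑ j : Fin n, ∫ v, term j v ∂(Measure.pi fun _ : Fin n => F) ≤ (n : ℝ) * K := by
    calc ∑ j : Fin n, ∫ v, term j v ∂(Measure.pi fun _ : Fin n => F)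
        ≤ ∑ _j : Fin n, K := by
          refine Finset.sum_le_sum fun j _ => ?_
          by_cases hj : j = 0
          · simp only [hterm, if_pos hj]
            rw [MeasureTheory.integral_zero]
            exact hKnn
          · exact (hval j hj).le
      _ = (n : ℝ) * K := by simp [mul_comm]
  refine hsum.trans ?_
  have hmle : (m : ℝ) ≤ β * (n : ℝ) ^ α := by
    rw [hm]; unfold numGroups
    exact Nat.floor_le (by positivity)
  have hss : s * s = (n : ℝ) ^ (-(1 + α)) := by
    rw [hs, ← Real.rpow_add hnpos]
    congr 1; ring
  have hone : (n : ℝ) * ((n : ℝ) ^ α * (n : ℝ) ^ (-(1 + α))) = 1 := by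
    rw [← Real.rpow_add hnpos]
    have he : α + -(1 + α) = -1 := by ring
    rw [he, Real.rpow_neg_one]
    exact mul_inv_cancel₀ hnpos.ne'
  have hrw : (n : ℝ) * K = γ * γ * I * ((n : ℝ) * ((m : ℝ) * (s * s))) := by
    rw [hK]; ring
  rw [hrw, hss]
  have h2 : (n : ℝ) * ((m : ℝ) * (n : ℝ) ^ (-(1 + α))) ≤ β := by
    have hp : (0:ℝ) ≤ (n : ℝ) ^ (-(1 + α)) := Real.rpow_nonneg hnpos.le _
    calc (n : ℝ) * ((m : ℝ) * (n : ℝ) ^ (-(1 + α)))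
        ≤ (n : ℝ) * (β * (n : ℝ) ^ α * (n : ℝ) ^ (-(1 + α))) := by
          refine mul_le_mul_of_nonneg_left ?_ hnpos.le
          exact mul_le_mul_of_nonneg_right hmle hp
      _ = β * ((n : ℝ) * ((n : ℝ) ^ α * (n : ℝ) ^ (-(1 + α)))) := by ring
      _ = β := by rw [hone, mul_one]
  calc γ * γ * I * ((n : ℝ) * ((m : ℝ) * (n : ℝ) ^ (-(1 + α))))
      ≤ γ * γ * I * β := by
        refine mul_le_mul_of_nonneg_left h2 ?_
        exact mul_nonneg (mul_nonneg hγ.le hγ.le) hInn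
    _ = β * γ * (γ * I) := by ring

lemma expDegBig_nonneg (α β γ : ℝ) (F : Measure ℝ) (n : ℕ) : 0 ≤ expDegBig α β γ F n := by
  unfold expDegBig
  split
  · exact integral_nonneg fun v => integral_nonneg fun B => Nat.cast_nonneg _
  · exact le_refl _

lemma tendsto_setInt (F : Measure ℝ) [IsProbabilityMeasure F]
    (hFint : Integrable (fun x => x) F) (S : ℕ → Set ℝ) (hS : ∀ n, MeasurableSet (S n))
    (hS' : ∀ x : ℝ, ∀ᶠ n in atTop, x ∉ S n) :
    Tendsto (fun n => ∫ x in S n, x ∂F) atTop (nhds 0) := by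
  have heq : ∀ n, ∫ x in S n, x ∂F = ∫ x, (S n).indicator (fun y => y) x ∂F := by
    intro n; rw [MeasureTheory.integral_indicator (hS n)]
  simp_rw [heq]
  have h0 : (0:ℝ) = ∫ x, (0:ℝ) ∂F := by simp
  rw [h0]
  refine tendsto_integral_filter_of_dominated_convergence (fun x => |x|)
    (Filter.Eventually.of_forall fun n =>
      (aestronglyMeasurable_id.indicator (hS n)))
    (Filter.Eventually.of_forall fun n => ae_of_all _ fun x => ?_)
    hFint.abs
    (ae_of_all _ fun x => ?_)
  · by_cases hx : x ∈ S n <;> simp [Set.indicator_apply, hx, abs_nonneg]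
  · refine Filter.Tendsto.congr' ?_ tendsto_const_nhds
    filter_upwards [hS' x] with n hn
    simp [Set.indicator_apply, hn]

/-- In the random intersection graph `G(n,m,F)` with `m = ⌊β n^α⌋` and
`p_i = min(γ W_i n^{-(1+α)/2}, 1)`, if `F` has finite mean, then the expected number
`D''` of neighbors of vertex `1` whose weight exceeds `n^{1/4}` satisfies
`E[D''] ≤ β γ (γ E[W·1{W > n^{1/4}}] + n^{(1+α)/2} P(γ W ≥ n^{(1+α)/2}))`, and in
particular `E[D''] → 0` as `n → ∞`. -/
theorem expected_degree_big_weights (α β γ : ℝ) (hα : 0 < α) (hβ : 0 < β) (hγ : 0 < γ)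
    (F : Measure ℝ) [IsProbabilityMeasure F]
    (hFpos : F (Set.Iic 0) = 0)
    (hFint : Integrable (fun x => x) F) (hFmean : ∫ x, x ∂F = 1) :
    (∀ n : ℕ, 1 ≤ n →
        expDegBig α β γ F n ≤
          β * γ * (γ * ∫ x in {y : ℝ | (n : ℝ) ^ ((1 : ℝ) / 4) < y}, x ∂F +
            (n : ℝ) ^ ((1 + α) / 2) *
              (F {x : ℝ | (n : ℝ) ^ ((1 + α) / 2) ≤ γ * x}).toReal)) ∧
    Tendsto (expDegBig α β γ F) atTop (nhds 0) := by
  have hbound : ∀ n : ℕ, 1 ≤ n →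
      expDegBig α β γ F n ≤
        β * γ * (γ * ∫ x in {y : ℝ | (n : ℝ) ^ ((1 : ℝ) / 4) < y}, x ∂F +
          (n : ℝ) ^ ((1 + α) / 2) *
            (F {x : ℝ | (n : ℝ) ^ ((1 + α) / 2) ≤ γ * x}).toReal) := by
    intro n hn
    refine (part1 α β γ hα hβ hγ F hFpos hFint hFmean n hn).trans
      (mul_le_mul_of_nonneg_left (le_add_of_nonneg_right ?_) ?_)
    · exact mul_nonneg (Real.rpow_nonneg (Nat.cast_nonneg n) _) ENNReal.toReal_nonneg
    · positivity
  refine ⟨hbound, ?_⟩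
  have htnat : Tendsto (fun n : ℕ => (n:ℝ)) atTop atTop := tendsto_natCast_atTop_atTop
  have ht1 : Tendsto (fun n : ℕ => (n:ℝ) ^ ((1:ℝ)/4)) atTop atTop :=
    (tendsto_rpow_atTop (by norm_num)).comp htnat
  have ht2 : Tendsto (fun n : ℕ => (n:ℝ) ^ ((1+α)/2)) atTop atTop :=
    (tendsto_rpow_atTop (by positivity)).comp htnat
  have hA : Tendsto (fun n : ℕ => ∫ x in {y : ℝ | (n : ℝ) ^ ((1 : ℝ) / 4) < y}, x ∂F)
      atTop (nhds 0) := by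
    refine tendsto_setInt F hFint _ (fun n => measurableSet_Ioi) (fun x => ?_)
    filter_upwards [ht1.eventually_ge_atTop x] with n hn
    simp only [Set.mem_setOf_eq, not_lt]
    exact hn
  have hSset : ∀ n : ℕ, {x : ℝ | (n : ℝ) ^ ((1 + α) / 2) ≤ γ * x} =
      Set.Ici ((n:ℝ)^((1+α)/2) / γ) := by
    intro n
    ext x
    simp only [Set.mem_setOf_eq, Set.mem_Ici, div_le_iff₀ hγ]
    rw [mul_comm]
  have hC : Tendsto (fun n : ℕ => ∫ x in {x : ℝ | (n : ℝ) ^ ((1 + α) / 2) ≤ γ * x}, x ∂F)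
      atTop (nhds 0) := by
    refine tendsto_setInt F hFint _
      (fun n => by rw [hSset n]; exact measurableSet_Ici) (fun x => ?_)
    have hdiv : Tendsto (fun n : ℕ => (n:ℝ)^((1+α)/2) / γ) atTop atTop :=
      ht2.atTop_div_const hγ
    filter_upwards [hdiv.eventually_gt_atTop x] with n hn
    exact not_le.mpr (by rw [mul_comm]; exact (lt_div_iff₀ hγ).mp hn)
  have hTle : ∀ n : ℕ, (n:ℝ)^((1+α)/2) * (F {x : ℝ | (n : ℝ) ^ ((1 + α) / 2) ≤ γ * x}).toReal ≤
      γ * ∫ x in {x : ℝ | (n : ℝ) ^ ((1 + α) / 2) ≤ γ * x}, x ∂F := by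
    intro n
    have hkey : (n:ℝ)^((1+α)/2) / γ *
        (F {x : ℝ | (n : ℝ) ^ ((1 + α) / 2) ≤ γ * x}).toReal ≤
        ∫ x in {x : ℝ | (n : ℝ) ^ ((1 + α) / 2) ≤ γ * x}, x ∂F := by
      refine setIntegral_ge_of_const_le_real (s := {x : ℝ | (n : ℝ) ^ ((1 + α) / 2) ≤ γ * x}) (by rw [hSset n]; exact measurableSet_Ici)
        (measure_ne_top F _) (fun x hx => ?_) hFint.integrableOn
      have hx' : (n : ℝ) ^ ((1 + α) / 2) ≤ γ * x := hx
      rw [div_le_iff₀ hγ]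
      linarith
    calc (n:ℝ)^((1+α)/2) * (F {x : ℝ | (n : ℝ) ^ ((1 + α) / 2) ≤ γ * x}).toReal
        = γ * ((n:ℝ)^((1+α)/2) / γ *
            (F {x : ℝ | (n : ℝ) ^ ((1 + α) / 2) ≤ γ * x}).toReal) := by
          field_simp
      _ ≤ γ * ∫ x in {x : ℝ | (n : ℝ) ^ ((1 + α) / 2) ≤ γ * x}, x ∂F :=
          mul_le_mul_of_nonneg_left hkey hγ.le
  have hU : Tendsto (fun n : ℕ => β * γ *
      (γ * (∫ x in {y : ℝ | (n : ℝ) ^ ((1 : ℝ) / 4) < y}, x ∂F) +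
        γ * ∫ x in {x : ℝ | (n : ℝ) ^ ((1 + α) / 2) ≤ γ * x}, x ∂F)) atTop (nhds 0) := by
    have := ((hA.const_mul γ).add (hC.const_mul γ)).const_mul (β * γ)
    simpa using this
  refine tendsto_of_tendsto_of_tendsto_of_le_of_le' tendsto_const_nhds hU ?_ ?_
  · exact Filter.Eventually.of_forall fun n => expDegBig_nonneg α β γ F n
  · filter_upwards [eventually_ge_atTop 1] with n hn
    refine (hbound n hn).trans ?_
    refine mul_le_mul_of_nonneg_left ?_ (by positivity)
    exact add_le_add_right (hTle n) _
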